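/- Let D be a division ring whose center F has characteristic different from 2, and let a ∈ D \ F satisfy a² ∈ F. Then a is a Kurosh element: there exists a division subring D₁ of D containing a, finite-dimensional over its center, with a not central in D₁. -/

import Mathlib

/-- A non-central element `x` of a division ring `D` is a Kurosh element if there is a
division subring `D₁` of `D` containing `x` such that `x` is non-central in `D₁` and
`D₁` is finite-dimensional over its own center. -/
def IsKurosh {D : Type*} [DivisionRing D] (x : D) : Prop :=
  ∃ D₁ : Subring D, (∀ y ∈ D₁, y⁻¹ ∈ D₁) ∧
    ∃ hx : x ∈ D₁, (⟨x, hx⟩ : D₁) ∉ Subring.center D₁ ∧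
      Module.Finite (Subring.center D₁) D₁

set_option maxHeartbeats 2000000 in
theorem kurosh_aux {D : Type*} [DivisionRing D] (a b : D) (ha0 : a ≠ 0) (hb0 : b ≠ 0)
    (h2 : (2 : D) ≠ 0) (ha2 : a ^ 2 ∈ Subring.center D) (hba : b * a = -(a * b)) :
    IsKurosh a := by
  classical
  have hab0 : a * b ≠ 0 := mul_ne_zero ha0 hb0
  have hne : a * b ≠ b * a := by
    rw [hba]
    intro h
    apply hab0
    have : (2 : D) * (a * b) = 0 := by rw [two_mul]; nth_rewrite 1 [h]; exact neg_add_cancel _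
    rcases mul_eq_zero.1 this with h' | h'
    · exact absurd h' h2
    · exact h'
  have hab : a * b = -(b * a) := by rw [hba, neg_neg]
  -- a² commutes with b ; b² commutes with a
  have ha2c : ∀ x, a ^ 2 * x = x * a ^ 2 := fun x => (Subring.mem_center_iff.1 ha2 x).symm
  have hb2a : a * b ^ 2 = b ^ 2 * a := by
    have : a * (b * b) = b * (b * a) := by
      rw [← mul_assoc, hab, neg_mul, mul_assoc, hab, mul_neg, neg_neg]
    simpa [pow_two, mul_assoc] using this
  -- the field k
  set S : Set D := ({a, b} : Set D) ∪ (Subring.centralizer {a, b} : Subring D) with hS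
  set k : Subring D := Subring.centralizer S with hk
  have hka : ∀ x ∈ k, a * x = x * a := fun x hx =>
    Subring.mem_centralizer_iff.1 hx a (Or.inl (by simp))
  have hkb : ∀ x ∈ k, b * x = x * b := fun x hx =>
    Subring.mem_centralizer_iff.1 hx b (Or.inl (by simp))
  have hmemk : ∀ x, (a * x = x * a) → (b * x = x * b) →
      (∀ g ∈ Subring.centralizer ({a, b} : Set D), g * x = x * g) → x ∈ k := by
    intro x h1 h2' h3
    refine Subring.mem_centralizer_iff.2 ?_
    rintro g (hg | hg)
    · rcases hg with hg | hg
      · subst hg; exact h1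
      · simp only [Set.mem_singleton_iff] at hg; subst hg; exact h2'
    · exact h3 g hg
  have hkmem_centralizer : ∀ x ∈ k, x ∈ Subring.centralizer ({a, b} : Set D) := by
    intro x hx
    refine Subring.mem_centralizer_iff.2 ?_
    rintro g (hg | hg)
    · subst hg; exact hka x hx
    · simp only [Set.mem_singleton_iff] at hg; subst hg; exact hkb x hx
  have hkcomm : ∀ x ∈ k, ∀ y ∈ k, x * y = y * x := by
    intro x hx y hy
    exact (Subring.mem_centralizer_iff.1 hy x (Or.inr (hkmem_centralizer x hx)))
  have hkinv : ∀ x ∈ k, x⁻¹ ∈ k := by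
    intro x hx
    refine Subring.mem_centralizer_iff.2 ?_
    intro g hg
    have h : Commute g x := Subring.mem_centralizer_iff.1 hx g hg
    exact (Commute.inv_right₀ h).eq
  have ha2k : a ^ 2 ∈ k := by
    refine hmemk _ (ha2c a).symm (ha2c b).symm ?_
    intro g _; exact (ha2c g).symm
  have hb2k : b ^ 2 ∈ k := by
    refine hmemk _ hb2a (by simp [pow_two, mul_assoc]) ?_
    intro g hg
    have h := Subring.mem_centralizer_iff.1 hg b (by simp)
    rw [pow_two, ← mul_assoc, ← h, mul_assoc, ← h, ← mul_assoc]
  -- commutative ring structure on k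
  letI : CommRing k := { (inferInstance : Ring k) with
    mul_comm := fun x y => Subtype.ext (hkcomm _ x.2 _ y.2) }
  -- the centralizer A of k
  set A : Subring D := Subring.centralizer (k : Set D) with hA
  have haA : a ∈ A := Subring.mem_centralizer_iff.2 fun g hg => (hka g hg).symm
  have hbA : b ∈ A := Subring.mem_centralizer_iff.2 fun g hg => (hkb g hg).symm
  have hkA : k ≤ A := by
    intro x hx
    exact Subring.mem_centralizer_iff.2 fun g hg => hkcomm g hg x hx
  letI : Algebra k A := RingHom.toAlgebra' (Subring.inclusion hkA)
    (fun c x => Subtype.ext (Subring.mem_centralizer_iff.1 x.2 c.1 c.2))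
  set c₁ : k := ⟨a ^ 2, ha2k⟩
  set c₂ : k := ⟨b ^ 2, hb2k⟩
  set q : QuaternionAlgebra.Basis A c₁ 0 c₂ :=
    { i := ⟨a, haA⟩
      j := ⟨b, hbA⟩
      k := ⟨a * b, mul_mem haA hbA⟩
      i_mul_i := Subtype.ext (by
        show a * a = a ^ 2 * 1 + 0 * a
        rw [mul_one, zero_mul, add_zero, pow_two])
      j_mul_j := Subtype.ext (by
        show b * b = b ^ 2 * 1
        rw [mul_one, pow_two])
      i_mul_j := rfl
      j_mul_i := Subtype.ext (by show b * a = 0 * b - a * b; rw [zero_mul, zero_sub]; exact hba) } with hq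
  set ψ : QuaternionAlgebra ↥k c₁ 0 c₂ →+* D := A.subtype.comp q.liftHom.toRingHom with hψ
  have hψeval : ∀ x : QuaternionAlgebra ↥k c₁ 0 c₂,
      ψ x = (x.re : D) + (x.imI : D) * a + (x.imJ : D) * b + (x.imK : D) * (a * b) := by
    intro x
    show A.subtype (q.lift x) = _
    rfl
  set D₁ : Subring D := ψ.range with hD₁
  have hamem : a ∈ D₁ := by
    refine ⟨⟨0, 1, 0, 0⟩, ?_⟩
    rw [hψeval]
    simp
  have hbmem : b ∈ D₁ := by
    refine ⟨⟨0, 0, 1, 0⟩, ?_⟩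
    rw [hψeval]
    simp
  have hcoe : ∀ c : k, ψ ((c : QuaternionAlgebra ↥k c₁ 0 c₂)) = (c : D) := by
    intro c
    rw [hψeval]
    simp
  have hksub : ∀ x ∈ k, x ∈ D₁ := fun x hx => ⟨((⟨x, hx⟩ : k) : QuaternionAlgebra ↥k c₁ 0 c₂), hcoe _⟩
  have hD₁A : ∀ x ∈ D₁, x ∈ A := by
    rintro x ⟨u, rfl⟩
    exact (q.liftHom u).2
  -- inverse closure
  have hinv : ∀ y ∈ D₁, y⁻¹ ∈ D₁ := by
    rintro y ⟨u, rfl⟩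
    by_cases hy0 : ψ u = 0
    · rw [hy0, inv_zero]; exact zero_mem _
    · set N : k := (u * star u).re with hN
      have hmulstar : ψ u * ψ (star u) = (N : D) := by
        rw [← map_mul, QuaternionAlgebra.mul_star_eq_coe u, hcoe]
      by_cases hNz : (N : D) = 0
      · -- then ψ (star u) = 0 and ψ u is the image of a scalar
        have hstar0 : ψ (star u) = 0 := by
          rcases mul_eq_zero.1 (hmulstar.trans hNz) with h | h
          · exact absurd h hy0
          · exact h
        have hself : ψ u = ((2 * u.re : k) : D) := by
          have := QuaternionAlgebra.self_add_star' (a := u)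
          calc ψ u = ψ u + ψ (star u) := by rw [hstar0, add_zero]
            _ = ψ (u + star u) := (map_add ψ u (star u)).symm
            _ = ((2 * u.re : k) : D) := by rw [this, hcoe, zero_mul, add_zero]
        rw [hself]
        exact hksub _ (hkinv _ (2 * u.re).2)
      · have : ψ u * (ψ (star u) * ((N : D))⁻¹) = 1 := by
          rw [← mul_assoc, hmulstar, mul_inv_cancel₀ hNz]
        rw [inv_eq_of_mul_eq_one_right this]
        exact mul_mem ⟨star u, rfl⟩ (hksub _ (hkinv _ N.2))
  -- a is non-central in D₁
  have hnc : (⟨a, hamem⟩ : D₁) ∉ Subring.center D₁ := by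
    intro h
    have := Subring.mem_center_iff.1 h ⟨b, hbmem⟩
    have hval : b * a = a * b := congrArg Subtype.val this
    exact hne (hval.symm)
  -- finiteness over the center
  have hcen : ∀ c : k, (c : D) ∈ D₁ := fun c => hksub _ c.2
  have hcenter : ∀ c : k, (⟨(c : D), hcen c⟩ : D₁) ∈ Subring.center D₁ := by
    intro c
    refine Subring.mem_center_iff.2 ?_
    intro g
    refine Subtype.ext ?_
    show (g : D) * (c : D) = (c : D) * (g : D)
    exact (Subring.mem_centralizer_iff.1 (hD₁A g.1 g.2) c.1 c.2).symm
  have hfg : (⊤ : Submodule (Subring.center D₁) D₁).FG := by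
    rw [Submodule.fg_def]
    refine ⟨{(⟨1, one_mem _⟩ : D₁), ⟨a, hamem⟩, ⟨b, hbmem⟩, ⟨a * b, mul_mem hamem hbmem⟩},
      Set.toFinite _, ?_⟩
    rw [eq_top_iff]
    intro x _
    obtain ⟨u, hu⟩ := x.2
    have hx' : x =
        (⟨⟨(u.re : D), hcen u.re⟩, hcenter u.re⟩ : Subring.center D₁) • ⟨1, one_mem _⟩
        + (⟨⟨(u.imI : D), hcen u.imI⟩, hcenter u.imI⟩ : Subring.center D₁) • ⟨a, hamem⟩
        + (⟨⟨(u.imJ : D), hcen u.imJ⟩, hcenter u.imJ⟩ : Subring.center D₁) • ⟨b, hbmem⟩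
        + (⟨⟨(u.imK : D), hcen u.imK⟩, hcenter u.imK⟩ : Subring.center D₁) •
            ⟨a * b, mul_mem hamem hbmem⟩ := by
      apply Subtype.ext
      show x.1 = (u.re : D) * 1 + (u.imI : D) * a + (u.imJ : D) * b + (u.imK : D) * (a * b)
      rw [← hu, hψeval, mul_one]
    rw [hx']
    refine add_mem (add_mem (add_mem ?_ ?_) ?_) ?_ <;>
      refine Submodule.smul_mem _ _ (Submodule.subset_span ?_)
    · exact Or.inl rfl
    · exact Or.inr (Or.inl rfl)
    · exact Or.inr (Or.inr (Or.inl rfl))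
    · exact Or.inr (Or.inr (Or.inr rfl))
  exact ⟨D₁, hinv, hamem, hnc, ⟨hfg⟩⟩

/-- Let `D` be a division ring whose center `F` has characteristic different from `2`,
and let `a ∈ D \ F` satisfy `a² ∈ F`. Then `a` is a Kurosh element. -/
theorem stmt_5 (D : Type*) [DivisionRing D]
    (hchar : ringChar (Subring.center D) ≠ 2)
    (a : D) (ha : a ∉ Subring.center D) (ha2 : a ^ 2 ∈ Subring.center D) :
    IsKurosh a := by
  classical
  have ha0 : a ≠ 0 := fun h => ha (h ▸ zero_mem _)
  have h2 : (2 : D) ≠ 0 := by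
    intro h
    have hz : ((2 : ℕ) : Subring.center D) = 0 := by
      apply Subtype.ext
      have h1 : ((((2 : ℕ) : Subring.center D)) : D) = ((2 : ℕ) : D) :=
        map_natCast (Subring.center D).subtype 2
      rw [h1]
      simpa using h
    have hdvd : ringChar (Subring.center D) ∣ 2 := (ringChar.spec _ 2).1 hz
    rcases (Nat.dvd_prime Nat.prime_two).1 hdvd with h1 | h1
    · have : ((1 : ℕ) : Subring.center D) = 0 := (ringChar.spec _ 1).2 (h1 ▸ dvd_refl _)
      simp at this
    · exact hchar h1
  obtain ⟨u, hu⟩ : ∃ u : D, ¬ u * a = a * u := by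
    by_contra h
    push_neg at h
    exact ha (Subring.mem_center_iff.2 h)
  set b : D := u - a * u * a⁻¹ with hb
  have hb0 : b ≠ 0 := by
    intro h
    apply hu
    have : u = a * u * a⁻¹ := by rwa [sub_eq_zero] at h
    calc u * a = a * u * a⁻¹ * a := by rw [← this]
      _ = a * u := by rw [mul_assoc, inv_mul_cancel₀ ha0, mul_one]
  have hba : b * a = -(a * b) := by
    have hc : u * a ^ 2 = a ^ 2 * u := Subring.mem_center_iff.1 ha2 u
    have h1 : a * u * a⁻¹ * a = a * u := by rw [mul_assoc, inv_mul_cancel₀ ha0, mul_one]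
    have h2' : a * (a * u * a⁻¹) = u * a := by
      have : a * (a * u) = u * a * a := by
        have := hc
        rw [pow_two] at this
        calc a * (a * u) = a * a * u := by rw [mul_assoc]
          _ = u * (a * a) := by rw [← pow_two, ← hc, pow_two]
          _ = u * a * a := by rw [mul_assoc]
      calc a * (a * u * a⁻¹) = a * (a * u) * a⁻¹ := by rw [← mul_assoc, ← mul_assoc]
        _ = u * a * a * a⁻¹ := by rw [this]
        _ = u * a := by rw [mul_assoc, mul_inv_cancel₀ ha0, mul_one]
    calc b * a = u * a - a * u * a⁻¹ * a := by rw [hb, sub_mul]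
      _ = u * a - a * u := by rw [h1]
      _ = -(a * u - u * a) := (neg_sub _ _).symm
      _ = -(a * b) := by rw [hb, mul_sub, h2']
  exact kurosh_aux a b ha0 hb0 h2 ha2 hba
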